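/- Let k ≥ 3 be an integer and let β be a real number with 1/(2^{k−1} cos^{k−1}(π/(k−1)) + 1) < β < 1. Then the degree-k polynomial P_k(z) = β(1 + z)^k + (1 − β)(1 + z^k) has at most k − 3 zeros (counted with multiplicity) on the unit circle {z ∈ ℂ : |z| = 1}; in particular, P_k has at least one zero z with |z| ≠ 1. -/

import Mathlib

open scoped Classical
open Polynomial



/-- Product of `(-1 - z)` over a conjugation-invariant multiset of non-real
complex numbers is a positive real. -/
lemma aux_prod_pos (S : Multiset ℂ) (hS : S.map (starRingEnd ℂ) = S)
    (hnr : ∀ z ∈ S, (starRingEnd ℂ) z ≠ z) :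
    ∃ x : ℝ, 0 < x ∧ (S.map (fun z => -1 - z)).prod = (x : ℂ) := by
  induction S using Multiset.strongInductionOn with
  | ih S ih =>
    rcases Multiset.empty_or_exists_mem S with h0 | ⟨a, ha⟩
    · exact ⟨1, one_pos, by simp [h0]⟩
    · have hca : (starRingEnd ℂ) a ∈ S := by
        have := Multiset.mem_map_of_mem (starRingEnd ℂ) ha
        rwa [hS] at this
      have hane : (starRingEnd ℂ) a ≠ a := hnr a ha
      have hca' : (starRingEnd ℂ) a ∈ S.erase a :=
        (Multiset.mem_erase_of_ne hane).mpr hca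
      set T : Multiset ℂ := (S.erase a).erase ((starRingEnd ℂ) a) with hT
      have hS1 : S = a ::ₘ (starRingEnd ℂ) a ::ₘ T := by
        rw [hT, Multiset.cons_erase hca', Multiset.cons_erase ha]
      have hinj : Function.Injective (starRingEnd ℂ) := (starRingEnd ℂ).injective
      have hTconj : T.map (starRingEnd ℂ) = T := by
        rw [hT, Multiset.map_erase _ hinj, Multiset.map_erase _ hinj, hS,
          Complex.conj_conj, Multiset.erase_comm]
      have hTlt : T < S := by
        calc T ≤ S.erase a := Multiset.erase_le _ _
        _ < S := Multiset.erase_lt.mpr ha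
      have hTsub : ∀ z ∈ T, z ∈ S := fun z hz =>
        Multiset.mem_of_le (le_of_lt hTlt) hz
      obtain ⟨x, hx, hxeq⟩ := ih T hTlt hTconj (fun z hz => hnr z (hTsub z hz))
      have hne1 : (1 : ℂ) + a ≠ 0 := by
        intro h
        apply hane
        have : a = -1 := by linear_combination h
        rw [this]
        simp
      have hnsq : 0 < Complex.normSq (1 + a) := Complex.normSq_pos.mpr hne1
      refine ⟨Complex.normSq (1 + a) * x, mul_pos hnsq hx, ?_⟩
      rw [hS1]
      simp only [Multiset.map_cons, Multiset.prod_cons, hxeq]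
      rw [show (-1 - a) * ((-1 - (starRingEnd ℂ) a) * (x:ℂ))
          = ((1+a) * (starRingEnd ℂ) (1+a)) * (x:ℂ) by
        simp only [map_add, map_one]; ring]
      rw [Complex.mul_conj]
      push_cast
      ring


lemma aux_eval_deriv (ζ : ℂ) (S : Multiset ℂ) (h : ∀ z ∈ S, ζ - z ≠ 0) :
    Polynomial.eval ζ (Polynomial.derivative (S.map (fun z => X - C z)).prod) =
      Polynomial.eval ζ (S.map (fun z => X - C z)).prod *
        (S.map (fun z => (ζ - z)⁻¹)).sum := by
  induction S using Multiset.induction with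
  | empty => simp
  | cons a S ih =>
    have ha : ζ - a ≠ 0 := h a (Multiset.mem_cons_self a S)
    have ih' := ih (fun z hz => h z (Multiset.mem_cons_of_mem hz))
    simp only [Multiset.map_cons, Multiset.prod_cons, Multiset.sum_cons,
      derivative_mul, derivative_sub, derivative_X, derivative_C, sub_zero,
      one_mul, eval_add, eval_mul, eval_sub, eval_X, eval_C, ih']
    field_simp

lemma aux_re_pos (ζ z : ℂ) (hz : ‖z‖ = 1) (hζ : 1 < ‖ζ‖) :
    0 < (ζ * (ζ - z)⁻¹).re := by
  have hd : ζ - z ≠ 0 := by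
    rw [sub_ne_zero]
    intro h
    rw [h, hz] at hζ
    exact lt_irrefl 1 hζ
  have hnsq : 0 < Complex.normSq (ζ - z) := Complex.normSq_pos.mpr hd
  rw [Complex.inv_def]
  have : (ζ * ((starRingEnd ℂ) (ζ - z) * (((Complex.normSq (ζ - z))⁻¹ : ℝ) : ℂ))).re
      = (ζ * (starRingEnd ℂ) (ζ - z)).re * (Complex.normSq (ζ - z))⁻¹ := by
    rw [mul_comm ((starRingEnd ℂ) (ζ - z)) _, ← mul_assoc,
      mul_comm ζ _, mul_assoc, Complex.re_ofReal_mul, mul_comm]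
  rw [this]
  apply mul_pos _ (inv_pos.mpr hnsq)
  have h1 : (ζ * (starRingEnd ℂ) (ζ - z)).re
      = Complex.normSq ζ - (ζ * (starRingEnd ℂ) z).re := by
    simp only [map_sub, mul_sub, Complex.sub_re]
    rw [Complex.mul_conj]
    simp
  rw [h1]
  have h2 : (ζ * (starRingEnd ℂ) z).re ≤ ‖ζ‖ := by
    calc (ζ * (starRingEnd ℂ) z).re ≤ ‖ζ * (starRingEnd ℂ) z‖ :=
        Complex.re_le_norm _
    _ = ‖ζ‖ := by rw [norm_mul, Complex.norm_conj, hz, mul_one]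
  have h3 : Complex.normSq ζ = ‖ζ‖ * ‖ζ‖ := by
    rw [← Complex.sq_norm]; ring
  nlinarith


lemma aux_msum_pos (S : Multiset ℝ) (h : ∀ x ∈ S, 0 < x) (h0 : S ≠ 0) : 0 < S.sum := by
  obtain ⟨a, ha⟩ := Multiset.exists_mem_of_ne_zero h0
  obtain ⟨T, rfl⟩ := Multiset.exists_cons_of_mem ha
  rw [Multiset.sum_cons]
  have h1 : 0 ≤ T.sum := Multiset.sum_nonneg
    (fun x hx => le_of_lt (h x (Multiset.mem_cons_of_mem hx)))
  have h2 : 0 < a := h a (Multiset.mem_cons_self a T)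
  linarith

set_option maxHeartbeats 2000000 in
theorem stmt14 (k : ℕ) (hk : 3 ≤ k) (β : ℝ)
    (hβl : 1 / (2 ^ (k - 1) * Real.cos (Real.pi / (k - 1)) ^ (k - 1) + 1) < β)
    (hβu : β < 1) :
    (((Polynomial.C (β : ℂ) * (1 + Polynomial.X) ^ k +
          Polynomial.C (1 - (β : ℂ)) * (1 + Polynomial.X ^ k)).roots.filter
        (fun z => ‖z‖ = 1)).card ≤ k - 3) ∧
    (∃ z ∈ (Polynomial.C (β : ℂ) * (1 + Polynomial.X) ^ k +
        Polynomial.C (1 - (β : ℂ)) * (1 + Polynomial.X ^ k)).roots,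
      ‖z‖ ≠ 1) := by
  classical
  rcases eq_or_lt_of_le hk with hk3 | hk4'
  · exfalso
    subst hk3
    norm_num [Real.cos_pi_div_two] at hβl
    linarith
  have hk4 : 4 ≤ k := hk4'
  set P : Polynomial ℂ := Polynomial.C (β : ℂ) * (1 + Polynomial.X) ^ k +
      Polynomial.C (1 - (β : ℂ)) * (1 + Polynomial.X ^ k) with hPdef
  -- basic real facts
  have hk4R : (4:ℝ) ≤ (k:ℝ) := by exact_mod_cast hk4
  have hφpos : 0 < Real.pi / ((k:ℝ) - 1) := div_pos Real.pi_pos (by linarith)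
  have hφlt : Real.pi / ((k:ℝ) - 1) < Real.pi / 2 :=
    div_lt_div_of_pos_left Real.pi_pos two_pos (by linarith)
  have hc : 0 < Real.cos (Real.pi / ((k:ℝ) - 1)) :=
    Real.cos_pos_of_mem_Ioo ⟨by linarith [Real.pi_pos], hφlt⟩
  set c := Real.cos (Real.pi / ((k:ℝ) - 1)) with hcdef
  have hβ0 : 0 < β := lt_trans (by positivity) hβl
  have h1β : 0 < 1 - β := by linarith
  have hrc : (1 - β) / β < (2 * c) ^ (k - 1) := by
    have hD : (0:ℝ) < 2 ^ (k-1) * c ^ (k-1) + 1 := by positivity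
    have h2 := (div_lt_iff₀ hD).mp hβl
    rw [div_lt_iff₀ hβ0, mul_pow]
    nlinarith
  -- polynomial basics
  have hmA : ((1:ℂ[X]) + X).Monic := by
    have h := Polynomial.monic_X_add_C (1:ℂ)
    rwa [Polynomial.C_1, add_comm] at h
  have hdegA : ((1:ℂ[X]) + X).natDegree = 1 := by
    have h : ((1:ℂ[X]) + X) = X + Polynomial.C 1 := by rw [Polynomial.C_1, add_comm]
    rw [h, Polynomial.natDegree_X_add_C]
  have hmAk : (((1:ℂ[X]) + X) ^ k).Monic := hmA.pow k
  have hdegAk : (((1:ℂ[X]) + X) ^ k).natDegree = k := by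
    rw [Polynomial.natDegree_pow, hdegA, mul_one]
  have hcoeffP : P.coeff k = 1 := by
    rw [hPdef, Polynomial.coeff_add, Polynomial.coeff_C_mul, Polynomial.coeff_C_mul]
    have h1 : (((1:ℂ[X]) + X) ^ k).coeff k = 1 := by
      have h := hmAk.coeff_natDegree
      rwa [hdegAk] at h
    have h2 : ((1:ℂ[X]) + X ^ k).coeff k = 1 := by
      rw [Polynomial.coeff_add, Polynomial.coeff_one, Polynomial.coeff_X_pow]
      simp [show k ≠ 0 by omega]
    rw [h1, h2]
    ring
  have hdegle : P.natDegree ≤ k := by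
    rw [hPdef]
    apply le_trans (Polynomial.natDegree_add_le _ _)
    rw [max_le_iff]
    constructor
    · exact le_trans (Polynomial.natDegree_C_mul_le _ _) (le_of_eq hdegAk)
    · apply le_trans (Polynomial.natDegree_C_mul_le _ _)
      apply le_trans (Polynomial.natDegree_add_le _ _)
      simp [Polynomial.natDegree_X_pow]
  have hmonic : P.Monic := Polynomial.monic_of_natDegree_le_of_coeff_eq_one k hdegle hcoeffP
  have hP0 : P ≠ 0 := hmonic.ne_zero
  have hdeg : P.natDegree = k :=
    le_antisymm hdegle (Polynomial.le_natDegree_of_ne_zero (by rw [hcoeffP]; exact one_ne_zero))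
  have hsplits : P.Splits := IsAlgClosed.splits P
  have hcard : Multiset.card P.roots = k := by
    have h := Polynomial.splits_iff_card_roots.mp hsplits
    rwa [hdeg] at h
  have hfact : P = (P.roots.map fun a => X - Polynomial.C a).prod :=
    hsplits.eq_prod_roots_of_monic hmonic
  have heval : ∀ z : ℂ, Polynomial.eval z P
      = (β:ℂ) * (1+z)^k + (1 - (β:ℂ)) * (1+z^k) := by
    intro z
    rw [hPdef]
    simp
  have hroot_iff : ∀ z : ℂ, z ∈ P.roots ↔ (β:ℂ)*(1+z)^k + (1-(β:ℂ))*(1+z^k) = 0 := by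
    intro z
    rw [Polynomial.mem_roots hP0, Polynomial.IsRoot, heval]
  have hzero_ne : (0:ℂ) ∉ P.roots := by
    rw [hroot_iff]
    simp [zero_pow (show k ≠ 0 by omega)]
  have hone_ne : (1:ℂ) ∉ P.roots := by
    rw [hroot_iff]
    intro h
    have h2 : (β:ℂ)*(1+1)^k + (1-(β:ℂ))*(1+1^k) = ((β*2^k + (1-β)*2 : ℝ) : ℂ) := by
      push_cast
      ring
    rw [h2] at h
    have h3 : β*2^k + (1-β)*2 = 0 := by exact_mod_cast h
    nlinarith [pow_pos (show (0:ℝ) < 2 by norm_num) k]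
  have hinj : Function.Injective (starRingEnd ℂ) := (starRingEnd ℂ).injective
  have hmapconj : P.map (starRingEnd ℂ) = P := by
    rw [hPdef]
    simp only [Polynomial.map_add, Polynomial.map_mul, Polynomial.map_pow, Polynomial.map_C,
      Polynomial.map_one, Polynomial.map_X, Polynomial.map_sub, map_sub, map_one, Complex.conj_ofReal]
  have hconjroots : P.roots.map (starRingEnd ℂ) = P.roots := by
    have h := hsplits.roots_map (starRingEnd ℂ)
    rw [hmapconj] at h
    exact h.symm
  have hinvroots : ∀ z ∈ P.roots, z⁻¹ ∈ P.roots := by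
    intro z hz
    have hz0 : z ≠ 0 := fun h => hzero_ne (h ▸ hz)
    rw [hroot_iff] at hz ⊢
    have hkey : z^k * ((β:ℂ)*(1+z⁻¹)^k + (1-(β:ℂ))*(1+(z⁻¹)^k))
        = (β:ℂ)*(1+z)^k + (1-(β:ℂ))*(1+z^k) := by
      have e1 : ((1:ℂ) + z⁻¹) = (1+z) * z⁻¹ := by field_simp; ring
      have e2 : ((1:ℂ)+z⁻¹)^k = (1+z)^k * (z^k)⁻¹ := by rw [e1, mul_pow, inv_pow]
      have e3 : ((z:ℂ)⁻¹)^k = (z^k)⁻¹ := inv_pow z k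
      have hzk : z^k ≠ 0 := pow_ne_zero k hz0
      rw [e2, e3]
      linear_combination ((β:ℂ)*(1+z)^k + (1-(β:ℂ))) * mul_inv_cancel₀ hzk
    have h2 := hkey.trans hz
    rcases mul_eq_zero.mp h2 with h | h
    · exact absurd h (pow_ne_zero k hz0)
    · exact h
  set Con := Multiset.filter (fun z => ‖z‖ = 1) P.roots with hCon
  set Ooff := Multiset.filter (fun z => ¬ ‖z‖ = 1) P.roots with hOoff
  have hdecomp : Con + Ooff = P.roots :=
    Multiset.filter_add_not (fun z => ‖z‖ = 1) P.roots
  have hsplit_card : Multiset.card Con + Multiset.card Ooff = k := by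
    rw [← Multiset.card_add, hdecomp]
    exact hcard
  suffices h3 : 3 ≤ Multiset.card Ooff by
    constructor
    · omega
    · have hne : Ooff ≠ 0 := by
        intro h0
        rw [h0] at h3
        simp at h3
      obtain ⟨a, ha⟩ := Multiset.exists_mem_of_ne_zero hne
      obtain ⟨har, hab⟩ := Multiset.mem_filter.mp ha
      exact ⟨a, har, hab⟩
  by_contra hlt
  push_neg at hlt
  have hpair : ∀ z ∈ Ooff, z⁻¹ ∈ Ooff := by
    intro z hz
    obtain ⟨hzr, hzab⟩ := Multiset.mem_filter.mp hz
    refine Multiset.mem_filter.mpr ⟨hinvroots z hzr, ?_⟩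
    rw [norm_inv]
    intro h
    exact hzab (inv_eq_one.mp h)
  have hselfinv : ∀ z ∈ Ooff, z⁻¹ ≠ z := by
    intro z hz h
    obtain ⟨hzr, hzab⟩ := Multiset.mem_filter.mp hz
    have hz0 : z ≠ 0 := fun h0 => hzero_ne (h0 ▸ hzr)
    have h1 : z * z = 1 := by
      nth_rewrite 1 [← h]
      exact inv_mul_cancel₀ hz0
    have h2 : ‖z‖ * ‖z‖ = 1 := by
      rw [← norm_mul, h1, norm_one]
    apply hzab
    nlinarith [norm_nonneg z]
  have hconjpair : ∀ z ∈ Ooff, (starRingEnd ℂ) z ∈ Ooff := by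
    intro z hz
    obtain ⟨hzr, hzab⟩ := Multiset.mem_filter.mp hz
    refine Multiset.mem_filter.mpr ⟨?_, by rwa [Complex.norm_conj]⟩
    have h := Multiset.mem_map_of_mem (starRingEnd ℂ) hzr
    rwa [hconjroots] at h
  have hO012 : Multiset.card Ooff = 0 ∨ Multiset.card Ooff = 1 ∨ Multiset.card Ooff = 2 := by
    omega
  have hderivP : Polynomial.derivative P
      = Polynomial.C ((k:ℂ)*(β:ℂ)) * (1+X)^(k-1) + Polynomial.C ((k:ℂ)*(1-(β:ℂ))) * X^(k-1) := by
    rw [hPdef, Polynomial.derivative_add, Polynomial.derivative_C_mul,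
      Polynomial.derivative_C_mul, Polynomial.derivative_pow, Polynomial.derivative_add,
      Polynomial.derivative_one, Polynomial.derivative_X, Polynomial.derivative_add,
      Polynomial.derivative_one, Polynomial.derivative_X_pow]
    simp only [Polynomial.C_mul, zero_add]
    ring
  rcases hO012 with h0 | h1 | h2
  · -- all roots on the circle : contradiction via critical point ζ outside the disk
    have hOnil : Ooff = 0 := Multiset.card_eq_zero.mp h0
    have hallcirc : ∀ z ∈ P.roots, ‖z‖ = 1 := by
      intro z hz
      by_contra hab
      have hmem : z ∈ Ooff := Multiset.mem_filter.mpr ⟨hz, hab⟩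
      rw [hOnil] at hmem
      simp at hmem
    set m := k - 1 with hm
    have hm3 : 3 ≤ m := by omega
    have hmR : ((m:ℝ)) = (k:ℝ) - 1 := by
      rw [hm]
      push_cast [Nat.cast_sub (show 1 ≤ k by omega)]
      ring
    have hx0 : (0:ℝ) < (1-β)/β := div_pos h1β hβ0
    set ρ := ((1-β)/β) ^ (((m:ℝ))⁻¹) with hρdef
    have hρpos : 0 < ρ := Real.rpow_pos_of_pos hx0 _
    have hmne : ((m:ℝ)) ≠ 0 := Nat.cast_ne_zero.mpr (by omega)
    have hρk : ρ ^ m = (1-β)/β := by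
      rw [hρdef, ← Real.rpow_natCast (((1-β)/β) ^ (((m:ℝ))⁻¹)) m,
        ← Real.rpow_mul (le_of_lt hx0), inv_mul_cancel₀ hmne, Real.rpow_one]
    have hρlt : ρ < 2*c := by
      have h1 : ρ ^ m < (2*c)^m := by
        rw [hρk]
        exact hrc
      exact lt_of_pow_lt_pow_left₀ m (by positivity) h1
    set φ := Real.pi / ((k:ℝ) - 1) with hφdef
    have hφpi : φ < Real.pi := lt_trans hφlt (by linarith [Real.pi_pos])
    have hsinpos : 0 < Real.sin φ := Real.sin_pos_of_pos_of_lt_pi hφpos hφpi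
    have hkne : ((k:ℝ)) - 1 ≠ 0 := by linarith
    have hmulφ : (m:ℝ) * φ = Real.pi := by
      rw [hφdef, hmR]
      field_simp
    set ω := Complex.exp ((φ:ℂ) * Complex.I) with hωdef
    have hωm : ω ^ m = -1 := by
      rw [hωdef, ← Complex.exp_nat_mul]
      have h1 : (m:ℂ) * ((φ:ℂ) * Complex.I) = (Real.pi:ℂ) * Complex.I := by
        have h2 : ((m:ℝ) * φ : ℝ) = Real.pi := hmulφ
        push_cast [← h2]
        ring
      rw [h1, Complex.exp_pi_mul_I]
    set u := (ρ:ℂ) * ω - 1 with hudef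
    have hu_eq : u = ((ρ*c - 1 : ℝ):ℂ) + ((ρ*Real.sin φ : ℝ):ℂ) * Complex.I := by
      rw [hudef, hωdef, Complex.exp_mul_I, ← Complex.ofReal_cos, ← Complex.ofReal_sin, hcdef]
      push_cast
      ring
    have hu0 : u ≠ 0 := by
      rw [hu_eq]
      intro hcon
      have him := congrArg Complex.im hcon
      simp only [Complex.add_im, Complex.ofReal_im, Complex.mul_im, Complex.ofReal_re,
        Complex.I_im, Complex.I_re, Complex.zero_im, mul_zero, mul_one, zero_add,
        add_zero, zero_mul, sub_zero] at him
      nlinarith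
    have hunormsq : Complex.normSq u = ρ^2 - 2*ρ*c + 1 := by
      rw [hu_eq, Complex.normSq_add_mul_I, hcdef]
      linear_combination ρ^2 * (Real.sin_sq_add_cos_sq φ)
    have hult : Complex.normSq u < 1 := by
      rw [hunormsq]
      nlinarith [hρpos, hρlt, hc]
    set ζ := u⁻¹ with hζdef
    have habsu : ‖u‖ < 1 := by
      have h2 : ‖u‖ ^ 2 = Complex.normSq u := Complex.sq_norm u
      nlinarith [norm_nonneg u]
    have habsu0 : 0 < ‖u‖ := norm_pos_iff.mpr hu0
    have hζabs : 1 < ‖ζ‖ := by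
      rw [hζdef, norm_inv]
      exact one_lt_inv_iff₀.mpr ⟨habsu0, habsu⟩
    have hζu : 1 + ζ = ζ * ((ρ:ℂ) * ω) := by
      rw [hζdef]
      field_simp [hu0]
      linear_combination hudef
    have hβne : (β:ℂ) ≠ 0 := by
      exact_mod_cast ne_of_gt hβ0
    have hρkC : ((ρ:ℂ))^m = (((1-β)/β : ℝ):ℂ) := by
      rw [← Complex.ofReal_pow, hρk]
    have hderivζ : Polynomial.eval ζ (Polynomial.derivative P) = 0 := by
      rw [hderivP]
      simp only [Polynomial.eval_add, Polynomial.eval_mul, Polynomial.eval_pow,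
        Polynomial.eval_C, Polynomial.eval_X, Polynomial.eval_one]
      rw [hζu, mul_pow, mul_pow, hωm, hρkC, Complex.ofReal_div]
      field_simp
      push_cast
      ring
    have hζne : ∀ z ∈ P.roots, ζ - z ≠ 0 := by
      intro z hz hcon
      rw [sub_eq_zero] at hcon
      rw [hcon, hallcirc z hz] at hζabs
      exact lt_irrefl _ hζabs
    have hED := aux_eval_deriv ζ P.roots hζne
    rw [← hfact, hderivζ] at hED
    have hPζ : Polynomial.eval ζ P ≠ 0 := by
      intro hcon
      have hzr : ζ ∈ P.roots := (Polynomial.mem_roots hP0).mpr hcon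
      rw [hallcirc ζ hzr] at hζabs
      exact lt_irrefl _ hζabs
    have hcne : P.roots ≠ 0 := by
      intro hnil
      rw [hnil] at hcard
      simp at hcard
      omega
    have hsum : (P.roots.map (fun z => (ζ - z)⁻¹)).sum ≠ 0 := by
      intro hcon
      have hre : (0:ℝ) < ((ζ * (P.roots.map (fun z => (ζ - z)⁻¹)).sum)).re := by
        have hrw1 : ζ * (P.roots.map (fun z => (ζ - z)⁻¹)).sum
            = (P.roots.map (fun z => ζ * (ζ - z)⁻¹)).sum :=
          (Multiset.sum_map_mul_left).symm
        rw [hrw1]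
        have hrw2 : ((P.roots.map (fun z => ζ * (ζ - z)⁻¹)).sum).re
            = ((P.roots.map (fun z => ζ * (ζ - z)⁻¹)).map Complex.re).sum :=
          map_multiset_sum Complex.reAddGroupHom _
        rw [hrw2, Multiset.map_map]
        apply aux_msum_pos
        · intro xx hxx
          obtain ⟨z, hzr, hzeq⟩ := Multiset.mem_map.mp hxx
          rw [← hzeq]
          exact aux_re_pos ζ z (hallcirc z hzr) hζabs
        · simp only [ne_eq, Multiset.map_eq_zero]
          exact hcne
      rw [hcon, mul_zero] at hre
      simp at hre
    exact (mul_ne_zero hPζ hsum) hED.symm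
  · -- exactly one root off circle : impossible by inversion pairing
    obtain ⟨x, hx⟩ := Multiset.card_eq_one.mp h1
    have hxO : x ∈ Ooff := by
      rw [hx]
      exact Multiset.mem_singleton_self x
    have hxi := hpair x hxO
    rw [hx, Multiset.mem_singleton] at hxi
    exact hselfinv x hxO hxi
  · -- exactly two roots off circle : impossible by sign of product at -1
    obtain ⟨x, y, hxy⟩ := Multiset.card_eq_two.mp h2
    have hxO : x ∈ Ooff := by
      rw [hxy]
      exact Multiset.mem_cons_self x {y}
    have hxr : x ∈ P.roots := (Multiset.mem_filter.mp hxO).1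
    have hxab : ¬ ‖x‖ = 1 := (Multiset.mem_filter.mp hxO).2
    have hx0 : x ≠ 0 := fun h0 => hzero_ne (h0 ▸ hxr)
    have hxi := hpair x hxO
    rw [hxy] at hxi
    have hy_eq : y = x⁻¹ := by
      rcases Multiset.mem_cons.mp hxi with h | h
      · exact absurd h (hselfinv x hxO)
      · exact (Multiset.mem_singleton.mp h).symm
    have hcx := hconjpair x hxO
    rw [hxy] at hcx
    have hxreal : (starRingEnd ℂ) x = x := by
      rcases Multiset.mem_cons.mp hcx with h | h
      · exact h
      · exfalso
        have h' : x * (starRingEnd ℂ) x = 1 := by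
          rw [Multiset.mem_singleton.mp h, hy_eq, mul_inv_cancel₀ hx0]
        rw [Complex.mul_conj] at h'
        have hns : Complex.normSq x = 1 := by exact_mod_cast h'
        have hsq : ‖x‖ ^ 2 = 1 := by rw [Complex.sq_norm, hns]
        have hfac : (‖x‖ - 1) * (‖x‖ + 1) = 0 := by linear_combination hsq
        rcases mul_eq_zero.mp hfac with h2 | h2
        · exact hxab (by linarith)
        · have := norm_nonneg x
          linarith
    obtain ⟨t, hxt⟩ : ∃ t : ℝ, x = (t:ℂ) := ⟨x.re, (Complex.conj_eq_iff_re.mp hxreal).symm⟩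
    have htab : ¬ |t| = 1 := by rwa [hxt, Complex.norm_real, Real.norm_eq_abs] at hxab
    have ht0 : t ≠ 0 := by
      intro h
      apply hx0
      rw [hxt, h]
      simp
    have htneg : t < 0 := by
      rcases lt_or_ge t 0 with h | h
      · exact h
      · exfalso
        have htpos : 0 < t := lt_of_le_of_ne h (Ne.symm ht0)
        have hroot := (hroot_iff x).mp hxr
        rw [hxt] at hroot
        have hcast : (β:ℂ)*(1+(t:ℂ))^k + (1-(β:ℂ))*(1+(t:ℂ)^k)
            = ((β*(1+t)^k + (1-β)*(1+t^k) : ℝ):ℂ) := by push_cast; ring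
        rw [hcast] at hroot
        have hreal : β*(1+t)^k + (1-β)*(1+t^k) = 0 := by exact_mod_cast hroot
        nlinarith [pow_pos (show (0:ℝ) < 1 + t by linarith) k, pow_pos htpos k]
    have htm1 : t ≠ -1 := by
      intro h
      apply htab
      rw [h]
      norm_num
    have hOoffval : Ooff = {(t:ℂ), ((t:ℂ))⁻¹} := by rw [hxy, hxt, hy_eq, hxt]
    have hr0 : (-1-t)*(-1-t⁻¹) = (1+t)^2 * t⁻¹ := by field_simp; ring
    have hr0neg : (-1-t)*(-1-t⁻¹) < 0 := by
      rw [hr0]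
      apply mul_neg_of_pos_of_neg
      · have h1t : (1:ℝ) + t ≠ 0 := fun h => htm1 (by linarith)
        positivity
      · exact inv_lt_zero.mpr htneg
    have hOprod : (Ooff.map (fun z => -1-z)).prod = (((-1-t)*(-1-t⁻¹) : ℝ) : ℂ) := by
      rw [hOoffval]
      simp only [Multiset.insert_eq_cons, Multiset.map_cons, Multiset.map_singleton,
        Multiset.prod_cons, Multiset.prod_singleton]
      push_cast
      ring
    rcases Nat.even_or_odd k with hke | hko
    · -- k even
      have hm1_ne : (-1:ℂ) ∉ P.roots := by
        rw [hroot_iff]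
        intro h
        have e0 : ((1:ℂ) + (-1)) = 0 := by ring
        rw [e0, zero_pow (show k ≠ 0 by omega), hke.neg_one_pow] at h
        have hcast : (β:ℂ)*0 + (1-(β:ℂ))*(1+1) = (((1-β)*2 : ℝ):ℂ) := by push_cast; ring
        rw [hcast] at h
        have : (1-β)*2 = 0 := by exact_mod_cast h
        linarith
      have hCconj : Con.map (starRingEnd ℂ) = Con := by
        have h1 : Multiset.filter (fun z => ‖z‖ = 1) (P.roots.map (starRingEnd ℂ))
            = (Multiset.filter (fun z => ‖z‖ = 1) P.roots).map (starRingEnd ℂ) := by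
          rw [Multiset.filter_map]
          congr 1
          apply Multiset.filter_congr
          intro z _
          simp [Complex.norm_conj]
        rw [hCon, ← h1, hconjroots]
      have hCnoreal : ∀ z ∈ Con, (starRingEnd ℂ) z ≠ z := by
        intro z hz heq
        obtain ⟨hzr, hzab⟩ := Multiset.mem_filter.mp hz
        obtain ⟨s, hs⟩ : ∃ s : ℝ, z = (s:ℂ) := ⟨z.re, (Complex.conj_eq_iff_re.mp heq).symm⟩
        have hsab : |s| = 1 := by rwa [hs, Complex.norm_real, Real.norm_eq_abs] at hzab
        rcases (abs_eq (by norm_num : (0:ℝ) ≤ 1)).mp hsab with h | h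
        · apply hone_ne
          rw [hs, h] at hzr
          simpa using hzr
        · apply hm1_ne
          rw [hs, h] at hzr
          simpa using hzr
      obtain ⟨xc, hxc, hxceq⟩ := aux_prod_pos Con hCconj hCnoreal
      have hevalm1 : Polynomial.eval (-1:ℂ) P = (((1-β)*2 : ℝ):ℂ) := by
        rw [heval]
        have e0 : ((1:ℂ) + (-1)) = 0 := by ring
        rw [e0, zero_pow (show k ≠ 0 by omega), hke.neg_one_pow]
        push_cast
        ring
      have hprodm1 : Polynomial.eval (-1:ℂ) P = ((P.roots.map (fun z => -1 - z))).prod := by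
        conv_lhs => rw [hfact]
        rw [Polynomial.eval_multiset_prod, Multiset.map_map]
        congr 1
        apply Multiset.map_congr rfl
        intro z _
        simp
      rw [← hdecomp, Multiset.map_add, Multiset.prod_add, hxceq, hOprod, hevalm1] at hprodm1
      have hfinal : (1-β)*2 = xc * ((-1-t)*(-1-t⁻¹)) := by exact_mod_cast hprodm1
      nlinarith [mul_neg_of_pos_of_neg hxc hr0neg]
    · -- k odd
      have hm1root : (-1:ℂ) ∈ P.roots := by
        rw [hroot_iff]
        have e0 : ((1:ℂ) + (-1)) = 0 := by ring
        rw [e0, zero_pow (show k ≠ 0 by omega), hko.neg_one_pow]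
        ring
      set S := P.roots.erase (-1) with hSdef
      have hconsS : P.roots = (-1) ::ₘ S := (Multiset.cons_erase hm1root).symm
      set QS := (S.map (fun z => X - Polynomial.C z)).prod with hQSdef
      have hfact2 : P = (X - Polynomial.C (-1)) * QS := by
        conv_lhs => rw [hfact]
        rw [hconsS, Multiset.map_cons, Multiset.prod_cons]
      have hdP : Polynomial.eval (-1:ℂ) (Polynomial.derivative P)
          = Polynomial.eval (-1:ℂ) QS := by
        rw [hfact2, Polynomial.derivative_mul]
        simp [Polynomial.derivative_sub, Polynomial.derivative_X, Polynomial.derivative_C]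
      have hkm1even : Even (k-1) := Nat.Odd.sub_odd hko odd_one
      have hdPsym : Polynomial.eval (-1:ℂ) (Polynomial.derivative P)
          = ((((k:ℝ))*(1-β) : ℝ):ℂ) := by
        rw [hderivP]
        simp only [Polynomial.eval_add, Polynomial.eval_mul, Polynomial.eval_pow,
          Polynomial.eval_C, Polynomial.eval_X, Polynomial.eval_one]
        have e0 : ((1:ℂ) + (-1)) = 0 := by ring
        rw [e0, zero_pow (show k - 1 ≠ 0 by omega), hkm1even.neg_one_pow]
        push_cast
        ring
      by_cases hm1S : (-1:ℂ) ∈ S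
      · have hQS0 : Polynomial.eval (-1:ℂ) QS = 0 := by
          rw [hQSdef, Polynomial.eval_multiset_prod, Multiset.map_map]
          apply Multiset.prod_eq_zero
          refine Multiset.mem_map.mpr ⟨-1, hm1S, by simp⟩
        have hcomb := hdP.symm.trans hdPsym
        rw [hQS0] at hcomb
        have : (k:ℝ)*(1-β) = 0 := by exact_mod_cast hcomb.symm
        nlinarith
      · have hSconj : S.map (starRingEnd ℂ) = S := by
          rw [hSdef, Multiset.map_erase _ hinj, hconjroots]
          norm_num
        have hOS : Ooff = Multiset.filter (fun z => ¬ ‖z‖ = 1) S := by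
          rw [hOoff]
          conv_lhs => rw [hconsS]
          rw [Multiset.filter_cons_of_neg]
          norm_num
        set CS := Multiset.filter (fun z => ‖z‖ = 1) S with hCSdef
        have hdecompS : CS + Ooff = S := by
          rw [hCSdef, hOS]
          exact Multiset.filter_add_not _ _
        have hCSconj : CS.map (starRingEnd ℂ) = CS := by
          have h1 : Multiset.filter (fun z => ‖z‖ = 1) (S.map (starRingEnd ℂ))
              = (Multiset.filter (fun z => ‖z‖ = 1) S).map (starRingEnd ℂ) := by
            rw [Multiset.filter_map]
            congr 1
            apply Multiset.filter_congr
            intro z _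
            simp [Complex.norm_conj]
          rw [hCSdef, ← h1, hSconj]
        have hCSnoreal : ∀ z ∈ CS, (starRingEnd ℂ) z ≠ z := by
          intro z hz heq
          obtain ⟨hzS, hzab⟩ := Multiset.mem_filter.mp hz
          have hzr : z ∈ P.roots := Multiset.mem_of_mem_erase hzS
          obtain ⟨s, hs⟩ : ∃ s : ℝ, z = (s:ℂ) := ⟨z.re, (Complex.conj_eq_iff_re.mp heq).symm⟩
          have hsab : |s| = 1 := by rwa [hs, Complex.norm_real, Real.norm_eq_abs] at hzab
          rcases (abs_eq (by norm_num : (0:ℝ) ≤ 1)).mp hsab with h | h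
          · apply hone_ne
            rw [hs, h] at hzr
            simpa using hzr
          · apply hm1S
            rw [hs, h] at hzS
            simpa using hzS
        obtain ⟨xc, hxc, hxceq⟩ := aux_prod_pos CS hCSconj hCSnoreal
        have hQval : Polynomial.eval (-1:ℂ) QS = ((S.map (fun z => -1 - z))).prod := by
          rw [hQSdef, Polynomial.eval_multiset_prod, Multiset.map_map]
          congr 1
          apply Multiset.map_congr rfl
          intro z _
          simp
        rw [← hdecompS, Multiset.map_add, Multiset.prod_add, hxceq, hOprod] at hQval
        have hcomb := hdP.symm.trans hdPsym
        rw [hQval] at hcomb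
        have hfinal : xc * ((-1-t)*(-1-t⁻¹)) = (k:ℝ)*(1-β) := by exact_mod_cast hcomb
        nlinarith [mul_neg_of_pos_of_neg hxc hr0neg]
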